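/- Let P be a compact region and t = [c,d] × {h} a lower tooth edge of P (P locally above t, endpoints convex). If g = (g₁, g₂) ∈ P with g₁ ∉ [c,d] and g r-sees the nearer endpoint of t, then the horizontal segment from (g₁, h) to that endpoint is contained in P, contradicting that t is a maximal horizontal edge of ∂P; hence no point outside the vertical strip [c,d] × ℝ can r-see all of t. -/
import Mathlib


/-- The axis-aligned rectangle spanned by two points of the plane. -/
def spanRect (p q : ℝ × ℝ) : Set (ℝ × ℝ) :=
  Set.Icc (min p.1 q.1) (max p.1 q.1) ×ˢ Set.Icc (min p.2 q.2) (max p.2 q.2)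

/-- If `t = [c,d] × {h}` is a maximal horizontal (tooth) edge of a compact
region `P`, then no point `g ∈ P` with `g₁ ∉ [c,d]` can r-see all of `t`. -/
theorem no_point_outside_strip_sees_whole_tooth (P : Set (ℝ × ℝ)) (hP : IsCompact P)
    (c d h : ℝ) (hcd : c ≤ d)
    (ht : Set.Icc c d ×ˢ ({h} : Set ℝ) ⊆ P)
    (ε : ℝ) (hε : 0 < ε)
    (hside : ∀ x ∈ Set.Ico (c - ε) c ∪ Set.Ioc d (d + ε), (x, h) ∉ P)
    (g : ℝ × ℝ) (hg : g ∈ P) (hgx : g.1 ∉ Set.Icc c d) :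
    ¬ ∀ q ∈ Set.Icc c d ×ˢ ({h} : Set ℝ), spanRect g q ⊆ P := by
  intro hsee
  rw [Set.mem_Icc, not_and_or, not_le, not_le] at hgx
  rcases hgx with hlt | hgt
  · -- g.1 < c : the rectangle to (c,h) contains a forbidden point left of c
    set x := max g.1 (c - ε / 2) with hx
    have hq : ((c : ℝ), h) ∈ Set.Icc c d ×ˢ ({h} : Set ℝ) := by
      constructor <;> simp [hcd]
    have hmem : (x, h) ∈ spanRect g (c, h) := by
      constructor
      · simp only [spanRect]
        constructor
        · exact le_trans (min_le_left _ _) (le_max_left _ _)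
        · exact le_trans (max_le hlt.le (by linarith)) (le_max_right _ _)
      · exact ⟨min_le_right _ _, le_max_right _ _⟩
    have hxP := hsee _ hq hmem
    exact hside x (Or.inl ⟨le_trans (by linarith) (le_max_right _ _),
      max_lt hlt (by linarith)⟩) hxP
  · -- g.1 > d : symmetric
    set x := min g.1 (d + ε / 2) with hx
    have hq : ((d : ℝ), h) ∈ Set.Icc c d ×ˢ ({h} : Set ℝ) := by
      constructor <;> simp [hcd]
    have hmem : (x, h) ∈ spanRect g (d, h) := by
      constructor
      · simp only [spanRect]
        constructor
        · exact le_trans (min_le_right _ _) (le_min hgt.le (by linarith))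
        · exact le_trans (min_le_left _ _) (le_max_left _ _)
      · exact ⟨min_le_right _ _, le_max_right _ _⟩
    have hxP := hsee _ hq hmem
    exact hside x (Or.inr ⟨lt_min hgt (by linarith),
      le_trans (min_le_right _ _) (by linarith)⟩) hxP
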